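/- Let γ be a great (totally geodesic) j-sphere inside the round n-sphere S^n, and let s ∈ S^n be any point not on γ. Then the visual image of γ from s — i.e., the image of γ under the map sending each point x ∈ γ to the unit tangent vector at s of the minimizing geodesic from s to x — is a great j-sphere in the visual sphere S_s^{n−1}, and it has the same j-area as γ. -/

import Mathlib

open MeasureTheory

/-- Visual map of the round sphere `S^n ⊂ ℝ^{n+1}` from a point `s`: the point
`x ≠ ±s` is sent to the initial unit tangent direction at `s` of the minimizing
geodesic from `s` to `x`, namely the normalization of `x − ⟪s,x⟫ s`. -/
noncomputable def visual {n : ℕ} (s x : EuclideanSpace ℝ (Fin (n + 1))) :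
    EuclideanSpace ℝ (Fin (n + 1)) :=
  ‖x - (inner ℝ s x : ℝ) • s‖⁻¹ • (x - (inner ℝ s x : ℝ) • s)

/-- The visual image of a great `j`-sphere `γ ⊂ S^n` from a point `s ∉ γ` is a
great `j`-sphere of the visual sphere (the unit sphere of the tangent space at `s`,
i.e. of the orthogonal complement of `s`), and it has the same `j`-area as `γ`. -/
theorem stmt_15 (n j : ℕ) (hj : j < n)
    (W : Submodule ℝ (EuclideanSpace ℝ (Fin (n + 1))))
    (hW : Module.finrank ℝ W = j + 1)
    (s : EuclideanSpace ℝ (Fin (n + 1))) (hs : ‖s‖ = 1)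
    (hsW : s ∉ (W : Set (EuclideanSpace ℝ (Fin (n + 1)))) ∩ Metric.sphere 0 1) :
    ∃ W' : Submodule ℝ (EuclideanSpace ℝ (Fin (n + 1))),
      Module.finrank ℝ W' = j + 1 ∧
      (∀ v ∈ W', (inner ℝ v s : ℝ) = 0) ∧
      visual s '' ((W : Set (EuclideanSpace ℝ (Fin (n + 1)))) ∩ Metric.sphere 0 1) =
        (W' : Set (EuclideanSpace ℝ (Fin (n + 1)))) ∩ Metric.sphere 0 1 ∧
      μH[(j : ℝ)] (visual s ''
          ((W : Set (EuclideanSpace ℝ (Fin (n + 1)))) ∩ Metric.sphere 0 1)) =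
        μH[(j : ℝ)]
          ((W : Set (EuclideanSpace ℝ (Fin (n + 1)))) ∩ Metric.sphere 0 1) := by
  classical
  have hsnW : s ∉ W := fun h => hsW ⟨h, by simp [hs]⟩
  -- the linear map x ↦ x - ⟪s,x⟫ • s
  set L : EuclideanSpace ℝ (Fin (n + 1)) →ₗ[ℝ] EuclideanSpace ℝ (Fin (n + 1)) :=
    LinearMap.id - ((innerSL ℝ s).toLinearMap.smulRight s) with hLdef
  have hLapp : ∀ x : EuclideanSpace ℝ (Fin (n + 1)), L x = x - (inner ℝ s x : ℝ) • s := fun x => rfl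
  set W' : Submodule ℝ (EuclideanSpace ℝ (Fin (n + 1))) := W.map L with hW'def
  -- injectivity on W
  have hker : ∀ w ∈ W, L w = 0 → w = 0 := by
    intro w hw h0
    by_contra hne
    set c : ℝ := (inner ℝ s w : ℝ) with hc'
    have hw2 : w = c • s := sub_eq_zero.mp (by rw [← hLapp]; exact h0)
    have hc : c ≠ 0 := by
      intro hc; apply hne; rw [hw2, hc, zero_smul]
    have : s = c⁻¹ • w := by
      rw [hw2, smul_smul, inv_mul_cancel₀ hc, one_smul]
    exact hsnW (this ▸ W.smul_mem _ hw)
  have hinj : Function.Injective (L.comp W.subtype) := by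
    rw [← LinearMap.ker_eq_bot]
    rw [LinearMap.ker_eq_bot']
    intro m hm
    have : L (m : EuclideanSpace ℝ (Fin (n + 1))) = 0 := hm
    exact Subtype.ext (hker m m.2 this)
  have hrange : LinearMap.range (L.comp W.subtype) = W' := by
    rw [LinearMap.range_comp, Submodule.range_subtype]
  have hW'rank : Module.finrank ℝ W' = j + 1 := by
    rw [← hrange]
    rw [LinearMap.finrank_range_of_inj hinj, hW]
  -- orthogonality
  have horth : ∀ v ∈ W', (inner ℝ v s : ℝ) = 0 := by
    rintro _ ⟨w, hw, rfl⟩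
    rw [hLapp]
    rw [inner_sub_left, real_inner_smul_left, real_inner_self_eq_norm_mul_norm, hs,
      real_inner_comm w s]
    ring
  -- image equality
  have hImg : visual s '' ((W : Set (EuclideanSpace ℝ (Fin (n + 1)))) ∩ Metric.sphere 0 1)
      = (W' : Set (EuclideanSpace ℝ (Fin (n + 1)))) ∩ Metric.sphere 0 1 := by
    ext v
    constructor
    · rintro ⟨x, ⟨hxW, hxS⟩, rfl⟩
      have hxn : ‖x‖ = 1 := by simpa using hxS
      have hLx : L x ≠ 0 := by
        intro h0
        have : x = 0 := hker x hxW h0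
        rw [this] at hxn; simp at hxn
      have hvW' : visual s x ∈ W' := by
        have : L x ∈ W' := Submodule.mem_map_of_mem hxW
        have := W'.smul_mem (‖L x‖⁻¹) this
        simpa [visual, hLapp] using this
      refine ⟨hvW', ?_⟩
      simp only [mem_sphere_iff_norm, sub_zero, Metric.mem_sphere, dist_zero_right]
      show ‖visual s x‖ = 1
      rw [visual, norm_smul, norm_inv, norm_norm]
      rw [inv_mul_cancel₀ (by simpa [hLapp] using hLx)]
    · rintro ⟨hvW', hvS⟩
      have hvn : ‖v‖ = 1 := by simpa using hvS
      obtain ⟨w, hwW, hwv⟩ := hvW'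
      have hw0 : w ≠ 0 := by
        intro h; rw [h] at hwv; rw [map_zero] at hwv
        rw [← hwv] at hvn; simp at hvn
      have hwn : ‖w‖ ≠ 0 := norm_ne_zero_iff.mpr hw0
      refine ⟨‖w‖⁻¹ • w, ⟨W.smul_mem _ hwW, ?_⟩, ?_⟩
      · simp [norm_smul, inv_mul_cancel₀ hwn]
      · have hLsm : (‖w‖⁻¹ • w : EuclideanSpace ℝ (Fin (n + 1))) - (inner ℝ s (‖w‖⁻¹ • w) : ℝ) • s = ‖w‖⁻¹ • v := by
          have := map_smul L (‖w‖⁻¹) w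
          rw [hwv] at this
          rw [← hLapp, this]
        rw [visual, hLsm, norm_smul, norm_inv, norm_norm, hvn, mul_one, inv_inv, smul_smul,
          mul_inv_cancel₀ hwn, one_smul]
  -- the ambient isometry
  have hWrank' : Module.finrank ℝ W = j + 1 := hW
  let b1 : OrthonormalBasis (Fin (j + 1)) ℝ W :=
    (stdOrthonormalBasis ℝ W).reindex (finCongr (by rw [hWrank']))
  let b2 : OrthonormalBasis (Fin (j + 1)) ℝ W' :=
    (stdOrthonormalBasis ℝ W').reindex (finCongr (by rw [hW'rank]))
  let f1 : W ≃ₗᵢ[ℝ] W' := b1.repr.trans b2.repr.symm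
  let g : W →ₗᵢ[ℝ] EuclideanSpace ℝ (Fin (n + 1)) := W'.subtypeₗᵢ.comp f1.toLinearIsometry
  let e : EuclideanSpace ℝ (Fin (n + 1)) →ₗᵢ[ℝ] EuclideanSpace ℝ (Fin (n + 1)) := g.extend
  have heW : ∀ w : W, e (w : EuclideanSpace ℝ (Fin (n + 1))) = g w := fun w => g.extend_apply w
  have hmaple : W.map e.toLinearMap ≤ W' := by
    rintro _ ⟨w, hw, rfl⟩
    show e w ∈ W'
    rw [heW ⟨w, hw⟩]
    exact (f1 ⟨w, hw⟩).2
  have hmaprank : Module.finrank ℝ (W.map e.toLinearMap) = j + 1 := by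
    rw [← (Submodule.equivMapOfInjective e.toLinearMap e.injective W).finrank_eq, hW]
  have hmap : W.map e.toLinearMap = W' :=
    Submodule.eq_of_le_of_finrank_eq hmaple (by rw [hmaprank, hW'rank])
  have eImg : (⇑e) '' ((W : Set (EuclideanSpace ℝ (Fin (n + 1)))) ∩ Metric.sphere 0 1) = (W' : Set (EuclideanSpace ℝ (Fin (n + 1)))) ∩ Metric.sphere 0 1 := by
    ext v
    constructor
    · rintro ⟨x, ⟨hxW, hxS⟩, rfl⟩
      refine ⟨hmap ▸ Submodule.mem_map_of_mem hxW, ?_⟩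
      simp only [Metric.mem_sphere, dist_zero_right, e.norm_map]
      simpa using hxS
    · rintro ⟨hvW', hvS⟩
      rw [← hmap] at hvW'
      obtain ⟨w, hwW, rfl⟩ := hvW'
      refine ⟨w, ⟨hwW, ?_⟩, rfl⟩
      have : ‖e.toLinearMap w‖ = ‖w‖ := e.norm_map w
      simp only [Metric.mem_sphere, dist_zero_right] at hvS ⊢
      rw [← this]; exact hvS
  refine ⟨W', hW'rank, horth, hImg, ?_⟩
  rw [hImg, ← eImg]
  exact e.isometry.hausdorffMeasure_image (Or.inl (Nat.cast_nonneg j)) _
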